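/- arXiv:2305.10662 — 2 statements merged into one kernel-verified Lean document; each statement's English description precedes it below -/
import Mathlib

section
/- (Directional integration-by-parts identity on ℝⁿ underlying sliced score matching.) Let p : ℝⁿ → ℝ be continuously differentiable with p(x) > 0 for all x, let s : ℝⁿ → ℝⁿ be continuously differentiable with compact support, and let v ∈ ℝⁿ. Then ∫_{ℝⁿ} p(x) · ⟨v, ∇ log p(x)⟩ · ⟨v, s(x)⟩ dx = − ∫_{ℝⁿ} p(x) · ⟨v, (Ds(x)) v⟩ dx, where Ds(x) denotes the (Fréchet) derivative of s at x and ⟨·,·⟩ the Euclidean inner product, provided both integrands are integrable. -/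
open scoped RealInnerProductSpace

/-- Directional integration-by-parts identity on ℝⁿ underlying sliced score matching:
for a positive `C¹` density `p`, a compactly supported `C¹` vector field `s` and a
direction `v`, `∫ p(x) ⟪v, ∇log p(x)⟫ ⟪v, s(x)⟫ dx = − ∫ p(x) ⟪v, (Ds(x)) v⟫ dx`,
provided both integrands are integrable. -/
theorem sliced_score_matching_integration_by_parts
    (n : ℕ)
    (p : EuclideanSpace ℝ (Fin n) → ℝ)
    (s : EuclideanSpace ℝ (Fin n) → EuclideanSpace ℝ (Fin n))
    (hp : ContDiff ℝ 1 p) (hppos : ∀ x, 0 < p x)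
    (hs : ContDiff ℝ 1 s) (hssupp : HasCompactSupport s)
    (v : EuclideanSpace ℝ (Fin n))
    (hint1 : MeasureTheory.Integrable
      (fun x => p x * ⟪v, gradient (fun y => Real.log (p y)) x⟫ * ⟪v, s x⟫))
    (hint2 : MeasureTheory.Integrable (fun x => p x * ⟪v, (fderiv ℝ s x) v⟫)) :
    ∫ x, p x * ⟪v, gradient (fun y => Real.log (p y)) x⟫ * ⟪v, s x⟫
      = - ∫ x, p x * ⟪v, (fderiv ℝ s x) v⟫ := by
  set g : EuclideanSpace ℝ (Fin n) → ℝ := fun x => ⟪v, s x⟫ with hg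
  have hpd : Differentiable ℝ p := hp.differentiable one_ne_zero
  have hsd : Differentiable ℝ s := hs.differentiable one_ne_zero
  have hgd : Differentiable ℝ g := fun x =>
    ((innerSL ℝ v).differentiableAt).comp x (hsd x)
  have hgder : ∀ x, fderiv ℝ g x v = ⟪v, (fderiv ℝ s x) v⟫ := by
    intro x
    have : fderiv ℝ g x = (innerSL ℝ v).comp (fderiv ℝ s x) :=
      ((innerSL ℝ v).hasFDerivAt.comp x (hsd x).hasFDerivAt).fderiv
    rw [this]; rfl
  -- the key rewriting: p x * ⟪v, ∇ log p x⟫ = fderiv p x v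
  have hkey : ∀ x, p x * ⟪v, gradient (fun y => Real.log (p y)) x⟫ = fderiv ℝ p x v := by
    intro x
    have hlog : fderiv ℝ (fun y => Real.log (p y)) x = (p x)⁻¹ • fderiv ℝ p x :=
      fderiv.log (hpd x) (hppos x).ne'
    have h1 : ⟪v, gradient (fun y => Real.log (p y)) x⟫
        = fderiv ℝ (fun y => Real.log (p y)) x v := by
      rw [real_inner_comm, gradient, InnerProductSpace.toDual_symm_apply]
    rw [h1, hlog]
    simp only [ContinuousLinearMap.smul_apply, smul_eq_mul]
    field_simp [(hppos x).ne']
  have hint1' : MeasureTheory.Integrable (fun x => fderiv ℝ p x v * g x) := by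
    refine hint1.congr (MeasureTheory.ae_of_all _ fun x => ?_)
    simp only [hg, hkey]
  have hint2' : MeasureTheory.Integrable (fun x => p x * fderiv ℝ g x v) := by
    refine hint2.congr (MeasureTheory.ae_of_all _ fun x => ?_)
    simp only [hgder]
  have hgcs : HasCompactSupport g := hssupp.comp_left (inner_zero_right v)
  have hintpg : MeasureTheory.Integrable (fun x => p x * g x) := by
    have hcs : HasCompactSupport (fun x => p x * g x) := hgcs.mul_left
    exact (hp.continuous.mul ((innerSL ℝ v).continuous.comp
      hs.continuous)).integrable_of_hasCompactSupport hcs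
  have key := integral_mul_fderiv_eq_neg_fderiv_mul_of_integrable hint1' hint2' hintpg (fun x _ => hpd x) (fun x _ => hgd x)
  calc ∫ x, p x * ⟪v, gradient (fun y => Real.log (p y)) x⟫ * ⟪v, s x⟫
      = ∫ x, fderiv ℝ p x v * g x := by
        apply MeasureTheory.integral_congr_ae
        exact MeasureTheory.ae_of_all _ fun x => by simp only [hg, hkey]
    _ = - ∫ x, p x * fderiv ℝ g x v := by rw [key, neg_neg]
    _ = - ∫ x, p x * ⟪v, (fderiv ℝ s x) v⟫ := by
        congr 1
        apply MeasureTheory.integral_congr_ae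
        exact MeasureTheory.ae_of_all _ fun x => by simp only [hgder]
end

section
/- (Sliced score-matching objective equivalence, Eq. (7) of the paper, without randomized response.) Let p : ℝⁿ → ℝ be a continuously differentiable probability density with p(x) > 0 for all x, let s : ℝⁿ → ℝⁿ be continuously differentiable with compact support, and let v ∈ ℝⁿ; assume all integrands below are integrable with respect to the measure p(x) dx. Then ∫_{ℝⁿ} p(x) · (1/2) (⟨v, ∇ log p(x)⟩ − ⟨v, s(x)⟩)² dx = ∫_{ℝⁿ} p(x) · ( ⟨v, (Ds(x)) v⟩ + (1/2) ⟨v, s(x)⟩² ) dx + C, where C = ∫_{ℝⁿ} p(x) · (1/2) ⟨v, ∇ log p(x)⟩² dx is a constant that does not depend on the model score s. Hence minimizing the projected Fisher divergence over s is equivalent to minimizing the objective ∫ p(x)(⟨v,(Ds(x))v⟩ + ½⟨v,s(x)⟩²) dx, which does not involve the unknown data score. -/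
set_option maxHeartbeats 1000000


open scoped RealInnerProductSpace
open MeasureTheory

/-- Sliced score-matching objective equivalence (Eq. (7) of the paper, without
randomized response): for a positive `C¹` probability density `p`, a compactly
supported `C¹` model score `s` and a projection direction `v`,
`∫ p(x) ½(⟪v,∇log p(x)⟫ − ⟪v,s(x)⟫)² dx
  = ∫ p(x) (⟪v,(Ds(x))v⟫ + ½⟪v,s(x)⟫²) dx + C`,
where `C = ∫ p(x) ½⟪v,∇log p(x)⟫² dx` does not depend on `s`. -/
theorem sliced_score_matching_objective_equiv
    (n : ℕ)
    (p : EuclideanSpace ℝ (Fin n) → ℝ)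
    (s : EuclideanSpace ℝ (Fin n) → EuclideanSpace ℝ (Fin n))
    (hp : ContDiff ℝ 1 p) (hppos : ∀ x, 0 < p x)
    (hpdens : ∫ x, p x = 1)
    (hs : ContDiff ℝ 1 s) (hssupp : HasCompactSupport s)
    (v : EuclideanSpace ℝ (Fin n))
    (hint1 : MeasureTheory.Integrable
      (fun x => p x * ((1 : ℝ)/2 *
        (⟪v, gradient (fun y => Real.log (p y)) x⟫ - ⟪v, s x⟫)^2)))
    (hint2 : MeasureTheory.Integrable
      (fun x => p x * (⟪v, (fderiv ℝ s x) v⟫ + (1 : ℝ)/2 * ⟪v, s x⟫^2)))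
    (hint3 : MeasureTheory.Integrable
      (fun x => p x * ((1 : ℝ)/2 *
        ⟪v, gradient (fun y => Real.log (p y)) x⟫^2))) :
    ∫ x, p x * ((1 : ℝ)/2 *
        (⟪v, gradient (fun y => Real.log (p y)) x⟫ - ⟪v, s x⟫)^2)
      = (∫ x, p x * (⟪v, (fderiv ℝ s x) v⟫ + (1 : ℝ)/2 * ⟪v, s x⟫^2))
        + ∫ x, p x * ((1 : ℝ)/2 *
            ⟪v, gradient (fun y => Real.log (p y)) x⟫^2) := by
  have hpd : Differentiable ℝ p := hp.differentiable one_ne_zero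
  have hsd : Differentiable ℝ s := hs.differentiable one_ne_zero
  set a : EuclideanSpace ℝ (Fin n) → ℝ :=
    fun x => ⟪v, gradient (fun y => Real.log (p y)) x⟫ with ha
  set b : EuclideanSpace ℝ (Fin n) → ℝ := fun x => ⟪v, s x⟫ with hb
  set d : EuclideanSpace ℝ (Fin n) → ℝ := fun x => ⟪v, (fderiv ℝ s x) v⟫ with hd
  -- derivative of b
  have hbF : ∀ x, HasFDerivAt b ((innerSL ℝ v).comp (fderiv ℝ s x)) x := by
    intro x
    exact ((innerSL ℝ v).hasFDerivAt).comp x (hsd x).hasFDerivAt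
  have hbd : Differentiable ℝ b := fun x => (hbF x).differentiableAt
  have hfderivb : ∀ x, fderiv ℝ b x v = d x := by
    intro x
    rw [(hbF x).fderiv]
    simp [d]
  -- p x * a x = fderiv p x v
  have hlog : ∀ x, HasFDerivAt (fun y => Real.log (p y))
      ((p x)⁻¹ • fderiv ℝ p x) x := by
    intro x
    exact (Real.hasDerivAt_log (hppos x).ne').comp_hasFDerivAt x (hpd x).hasFDerivAt
  have hpa : ∀ x, p x * a x = fderiv ℝ p x v := by
    intro x
    have hg : gradient (fun y => Real.log (p y)) x =
        (InnerProductSpace.toDual ℝ _).symm ((p x)⁻¹ • fderiv ℝ p x) := by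
      rw [gradient, (hlog x).fderiv]
    rw [ha]
    simp only [hg]
    rw [real_inner_comm, InnerProductSpace.toDual_symm_apply]
    simp only [ContinuousLinearMap.smul_apply, smul_eq_mul]
    field_simp
    exact mul_div_cancel_left₀ _ (hppos x).ne'
  -- compact supports
  have hbcs : HasCompactSupport b := by
    apply HasCompactSupport.comp_left (g := fun w => ⟪v, w⟫) hssupp
    simp
  have hdcs : HasCompactSupport d := by
    apply HasCompactSupport.comp_left (g := fun L : _ →L[ℝ] _ => ⟪v, L v⟫)
      (hssupp.fderiv ℝ)
    simp
  have hbc : Continuous b := (innerSL ℝ v).continuous.comp hs.continuous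
  have hdc : Continuous d := by
    have : Continuous (fun x => fderiv ℝ s x) := hs.continuous_fderiv one_ne_zero
    exact (innerSL ℝ v).continuous.comp
      ((ContinuousLinearMap.apply ℝ _ v).continuous.comp this)
  -- integrability facts
  have hIpd : Integrable (fun x => p x * d x) := by
    apply Continuous.integrable_of_hasCompactSupport
      (hp.continuous.mul hdc) (hdcs.mul_left)
  have hIpb2 : Integrable (fun x => p x * ((1:ℝ)/2 * b x ^ 2)) := by
    apply Continuous.integrable_of_hasCompactSupport
    · exact hp.continuous.mul (continuous_const.mul (hbc.pow 2))
    · apply HasCompactSupport.mul_left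
      have := hbcs.comp_left (g := fun t : ℝ => (1:ℝ)/2 * t ^ 2) (by norm_num)
      exact this
  have hIpab : Integrable (fun x => p x * a x * b x) := by
    have : (fun x => p x * a x * b x) = fun x => fderiv ℝ p x v * b x := by
      funext x; rw [hpa x]
    rw [this]
    apply Continuous.integrable_of_hasCompactSupport
    · have : Continuous (fun x => fderiv ℝ p x) := hp.continuous_fderiv one_ne_zero
      exact ((ContinuousLinearMap.apply ℝ _ v).continuous.comp this).mul hbc
    · exact hbcs.mul_left
  have hIpa2 : Integrable (fun x => p x * ((1:ℝ)/2 * a x ^ 2)) := hint3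
  have hIpgb : Integrable (fun x => p x * b x) := by
    apply Continuous.integrable_of_hasCompactSupport
      (hp.continuous.mul hbc) (hbcs.mul_left)
  -- integration by parts
  have hIBP : ∫ x, p x * d x = - ∫ x, p x * a x * b x := by
    have h1 : ∫ x, p x * fderiv ℝ b x v = - ∫ x, fderiv ℝ p x v * b x := by
      apply integral_mul_fderiv_eq_neg_fderiv_mul_of_integrable _ _ hIpgb (fun x _ => hpd x) (fun x _ => hbd x)
      · have : (fun x => p x * a x * b x) = fun x => fderiv ℝ p x v * b x := by
          funext x; rw [hpa x]
        rw [← this]; exact hIpab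
      · have h : (fun x => p x * fderiv ℝ b x v) = fun x => p x * d x := by
          funext x; rw [hfderivb x]
        rw [h]; exact hIpd
    have h2 : (fun x => p x * fderiv ℝ b x v) = fun x => p x * d x := by
      funext x; rw [hfderivb x]
    have h3 : (fun x => fderiv ℝ p x v * b x) = fun x => p x * a x * b x := by
      funext x; rw [hpa x]
    rw [h2, h3] at h1
    exact h1
  -- split hint2
  have hsplit : ∫ x, p x * (d x + (1:ℝ)/2 * b x ^ 2)
      = (∫ x, p x * d x) + ∫ x, p x * ((1:ℝ)/2 * b x ^ 2) := by
    rw [← integral_add hIpd hIpb2]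
    congr 1; funext x; ring
  -- expand LHS
  have hexp : (fun x => p x * ((1:ℝ)/2 * (a x - b x)^2))
      = fun x => p x * ((1:ℝ)/2 * a x ^ 2) - p x * a x * b x
          + p x * ((1:ℝ)/2 * b x ^ 2) := by
    funext x; ring
  calc ∫ x, p x * ((1:ℝ)/2 * (a x - b x)^2)
      = ∫ x, (p x * ((1:ℝ)/2 * a x ^ 2) - p x * a x * b x
          + p x * ((1:ℝ)/2 * b x ^ 2)) := by rw [hexp]
    _ = ((∫ x, p x * ((1:ℝ)/2 * a x ^ 2)) - ∫ x, p x * a x * b x)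
          + ∫ x, p x * ((1:ℝ)/2 * b x ^ 2) := by
        rw [integral_add
            (f := fun x => p x * ((1:ℝ)/2 * a x ^ 2) - p x * a x * b x)
            (g := fun x => p x * ((1:ℝ)/2 * b x ^ 2))
            (hIpa2.sub hIpab) hIpb2, integral_sub hIpa2 hIpab]
    _ = (∫ x, p x * (d x + (1:ℝ)/2 * b x ^ 2))
          + ∫ x, p x * ((1:ℝ)/2 * a x ^ 2) := by
        rw [hsplit, hIBP]; ring
end
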